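/- In G(2^m, 2), for every vertex v there exists a shortest path from 0 to v, represented as a sequence of steps ±2^j, containing no pair +2^j and −2^j for the same j, and such that for every 0 ≤ i ≤ m−2, the path does not use both a step ±2^i and a step ±2^{i+1}. -/

import Mathlib

/-- The recursive circulant `G(N,d)`: the circulant graph on `ZMod N` with jumps
`±d^i` for `0 ≤ i ≤ ⌈log_d N⌉ - 1`. -/
def recCirc (N d : ℕ) : SimpleGraph (ZMod N) :=
  SimpleGraph.circulantGraph {x : ZMod N | ∃ i < Nat.clog d N, x = (d : ZMod N) ^ i}

/-- The value of a step: `(j, true)` is `+d^j` and `(j, false)` is `-d^j`. -/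
def stepVal (N d : ℕ) (p : ℕ × Bool) : ZMod N :=
  if p.2 then (d : ZMod N) ^ p.1 else -((d : ZMod N) ^ p.1)

def nafDigit (x : ℤ) : ℤ := if x % 4 = 1 then 1 else -1

def naf (x : ℤ) : List (ℕ × Bool) :=
  if h : x = 0 then []
  else if h2 : x % 2 = 0 then (naf (x / 2)).map (fun p => (p.1 + 1, p.2))
  else (0, decide (x % 4 = 1)) ::
    (naf ((x - nafDigit x) / 2)).map (fun p => (p.1 + 1, p.2))
  termination_by x.natAbs
  decreasing_by
  · omega
  · unfold nafDigit; split <;> omega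

theorem naf_zero : naf 0 = [] := by unfold naf; simp

theorem naf_even {x : ℤ} (h : x ≠ 0) (h2 : x % 2 = 0) :
    naf x = (naf (x / 2)).map (fun p => (p.1 + 1, p.2)) := by
  rw [naf]; simp [h, h2]

theorem naf_odd {x : ℤ} (h2 : x % 2 ≠ 0) :
    naf x = (0, decide (x % 4 = 1)) ::
      (naf ((x - nafDigit x) / 2)).map (fun p => (p.1 + 1, p.2)) := by
  rw [naf]; simp [h2]; omega

theorem nafDigit_cases (x : ℤ) : nafDigit x = 1 ∨ nafDigit x = -1 := by
  unfold nafDigit; split <;> simp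

theorem nafDigit_sub {x : ℤ} (h2 : x % 2 ≠ 0) : (x - nafDigit x) % 4 = 0 := by
  unfold nafDigit; split <;> omega

theorem nafDigit_congr {x y : ℤ} (h : x % 4 = y % 4) : nafDigit x = nafDigit y := by
  unfold nafDigit; rw [h]

/-- Mutual lemma: G: length can drop by at most one when adding a unit;
F: for even x, adding a unit never decreases the NAF length. -/
theorem naf_FG (x : ℤ) : ∀ d : ℤ, d = 1 ∨ d = -1 →
    (naf x).length ≤ 1 + (naf (x + d)).length ∧
    (x % 2 = 0 → (naf x).length ≤ (naf (x + d)).length) := by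
  intro d hd
  by_cases hx : x = 0
  · subst hx; simp [naf_zero]
  by_cases h2 : x % 2 = 0
  · -- even case
    have hxd2 : (x + d) % 2 ≠ 0 := by omega
    have hd' := nafDigit_cases (x + d)
    have hsub := nafDigit_sub hxd2
    rw [naf_even hx h2, naf_odd hxd2]
    simp only [List.length_map, List.length_cons]
    by_cases hsame : nafDigit (x + d) = d
    · have he : (x + d - nafDigit (x + d)) / 2 = x / 2 := by omega
      rw [he]; omega
    · have hopp : nafDigit (x + d) = -d := by omega
      have he : (x + d - nafDigit (x + d)) / 2 = x / 2 + d := by omega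
      rw [he]
      have IH := (naf_FG (x / 2) d hd).1
      omega
  · -- odd case
    refine ⟨?_, fun hc => absurd hc h2⟩
    have hd' := nafDigit_cases x
    have hsub := nafDigit_sub h2
    rw [naf_odd h2]
    simp only [List.length_map, List.length_cons]
    by_cases hopp : d = -nafDigit x
    · by_cases hz : x + d = 0
      · have : (x - nafDigit x) / 2 = 0 := by omega
        rw [this, naf_zero]; simp
      · have he2 : (x + d) % 2 = 0 := by omega
        rw [naf_even hz he2]
        have he : (x + d) / 2 = (x - nafDigit x) / 2 := by omega
        rw [he]; simp [Nat.add_comm]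
    · have hdd : d = nafDigit x := by omega
      have hne : x + d ≠ 0 := by omega
      have he2 : (x + d) % 2 = 0 := by omega
      rw [naf_even hne he2]
      have he : (x + d) / 2 = (x - nafDigit x) / 2 + nafDigit x := by omega
      rw [he]
      have IH := (naf_FG ((x - nafDigit x) / 2) (nafDigit x) hd').2 (by omega)
      simp only [List.length_map]
      omega
  termination_by x.natAbs
  decreasing_by
  · omega
  · omega

theorem naf_P1 (x : ℤ) : ∀ d : ℤ, d = 1 ∨ d = -1 →
    (naf (x + 2 * d)).length ≤ (naf x).length + 1 := by
  intro d hd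
  by_cases hz : x + 2 * d = 0
  · rw [hz, naf_zero]; simp
  by_cases h2 : x % 2 = 0
  · -- x even
    have hx2 : (x + 2 * d) % 2 = 0 := by omega
    rw [naf_even hz hx2]
    have he : (x + 2 * d) / 2 = x / 2 + d := by omega
    rw [he]
    have IH := (naf_FG (x / 2 + d) (-d) (by omega)).1
    simp only [add_neg_cancel_right] at IH
    simp only [List.length_map]
    by_cases hx : x = 0
    · subst hx; norm_num [naf_zero] at IH ⊢; omega
    · rw [naf_even hx h2]; simp only [List.length_map]; omega
  · -- x odd
    have hd' := nafDigit_cases x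
    have hsub := nafDigit_sub h2
    have h2' : (x + 2 * d) % 2 ≠ 0 := by omega
    have hdig : nafDigit (x + 2 * d) = -nafDigit x := by
      unfold nafDigit; split <;> split <;> omega
    have hsub2 := nafDigit_sub h2'
    rw [naf_odd h2', naf_odd h2]
    simp only [List.length_map, List.length_cons]
    rw [hdig] at hsub2 ⊢
    by_cases hopp : d = -nafDigit x
    · have he : (x + 2 * d - -nafDigit x) / 2 = (x - nafDigit x) / 2 := by omega
      rw [he]; omega
    · have hdd : d = nafDigit x := by omega
      have he : (x + 2 * d - -nafDigit x) / 2 = (x - nafDigit x) / 2 + 2 * nafDigit x := by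
        omega
      rw [he]
      have IH := naf_P1 ((x - nafDigit x) / 2) (nafDigit x) hd'
      omega
  termination_by x.natAbs
  decreasing_by omega

theorem naf_P (j : ℕ) : ∀ (x d : ℤ), d = 1 ∨ d = -1 →
    (naf (x + d * 2 ^ j)).length ≤ (naf x).length + 1 := by
  match j with
  | 0 =>
    intro x d hd
    have IH := (naf_FG (x + d * 2 ^ 0) (-d) (by omega)).1
    simp only [pow_zero, mul_one] at IH ⊢
    have he : x + d + -d = x := by ring
    rw [he] at IH
    omega
  | 1 =>
    intro x d hd
    have := naf_P1 x d hd
    have he : x + d * 2 ^ 1 = x + 2 * d := by ring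
    rw [he]
    omega
  | (j + 2) =>
    intro x d hd
    have hd2 : d * 2 ^ (j + 2) = 2 * (d * 2 ^ (j + 1)) := by ring
    have hd1 : d * 2 ^ (j + 1) = 2 * (d * 2 ^ j) := by ring
    by_cases hz : x + d * 2 ^ (j + 2) = 0
    · rw [hz, naf_zero]; simp
    by_cases h2 : x % 2 = 0
    · have hx2 : (x + d * 2 ^ (j + 2)) % 2 = 0 := by omega
      rw [naf_even hz hx2]
      have he : (x + d * 2 ^ (j + 2)) / 2 = x / 2 + d * 2 ^ (j + 1) := by omega
      rw [he]
      have IH := naf_P (j + 1) (x / 2) d hd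
      simp only [List.length_map]
      by_cases hx : x = 0
      · subst hx; simpa using IH
      · rw [naf_even hx h2]; simp only [List.length_map]; omega
    · have hd' := nafDigit_cases x
      have hsub := nafDigit_sub h2
      have h2' : (x + d * 2 ^ (j + 2)) % 2 ≠ 0 := by omega
      have hdig : nafDigit (x + d * 2 ^ (j + 2)) = nafDigit x := by
        apply nafDigit_congr; omega
      rw [naf_odd h2', naf_odd h2, hdig]
      simp only [List.length_map, List.length_cons]
      have he : (x + d * 2 ^ (j + 2) - nafDigit x) / 2
          = (x - nafDigit x) / 2 + d * 2 ^ (j + 1) := by omega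
      rw [he]
      have IH := naf_P (j + 1) ((x - nafDigit x) / 2) d hd
      omega

def stepInt (p : ℕ × Bool) : ℤ := if p.2 then 2 ^ p.1 else -(2 ^ p.1)

theorem naf_min (L : List (ℕ × Bool)) :
    (naf ((L.map stepInt).sum)).length ≤ L.length := by
  induction L with
  | nil => simp [naf_zero]
  | cons p L ih =>
    simp only [List.map_cons, List.sum_cons, List.length_cons]
    have he : stepInt p + (L.map stepInt).sum
        = (L.map stepInt).sum + (if p.2 then (1:ℤ) else -1) * 2 ^ p.1 := by
      unfold stepInt; split <;> ring
    rw [he]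
    have := naf_P p.1 ((L.map stepInt).sum) (if p.2 then (1:ℤ) else -1) (by split <;> simp)
    omega

theorem stepInt_shift (p : ℕ × Bool) : stepInt (p.1 + 1, p.2) = 2 * stepInt p := by
  unfold stepInt; simp only [pow_succ]; split <;> ring

theorem sum_map_shift (l : List (ℕ × Bool)) :
    ((l.map (fun p => (p.1 + 1, p.2))).map stepInt).sum = 2 * (l.map stepInt).sum := by
  induction l with
  | nil => simp
  | cons p l ih => simp only [List.map_cons, List.sum_cons, ih, stepInt_shift]; ring

theorem naf_sum (x : ℤ) : ((naf x).map stepInt).sum = x := by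
  by_cases hx : x = 0
  · subst hx; simp [naf_zero]
  by_cases h2 : x % 2 = 0
  · rw [naf_even hx h2, sum_map_shift, naf_sum (x / 2)]
    omega
  · have hd' := nafDigit_cases x
    have hsub := nafDigit_sub h2
    rw [naf_odd h2]
    simp only [List.map_cons, List.sum_cons, sum_map_shift, naf_sum ((x - nafDigit x) / 2)]
    have : stepInt (0, decide (x % 4 = 1)) = nafDigit x := by
      unfold stepInt nafDigit; by_cases h : x % 4 = 1 <;> simp [h]
    rw [this]; omega
  termination_by x.natAbs
  decreasing_by
  · omega
  · omega

theorem naf_ne_nil {x : ℤ} (hx : x ≠ 0) : (naf x).length ≠ 0 := by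
  intro h
  apply hx
  rw [← naf_sum x, List.length_eq_zero_iff.mp h]
  simp

/-- Chain and parity lower bound for exponents. -/
theorem naf_chain (x : ℤ) :
    (naf x).Chain' (fun p q => p.1 + 2 ≤ q.1) ∧ (x % 2 = 0 → ∀ p ∈ naf x, 1 ≤ p.1) := by
  by_cases hx : x = 0
  · subst hx; simp [naf_zero, List.Chain']
  by_cases h2 : x % 2 = 0
  · have IH := naf_chain (x / 2)
    rw [naf_even hx h2]
    constructor
    · unfold List.Chain'; rw [List.isChain_map]
      exact List.IsChain.imp (fun a b h => by simpa using h) IH.1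
    · intro _ p hp
      obtain ⟨q, _, rfl⟩ := List.mem_map.mp hp
      omega
  · have hd' := nafDigit_cases x
    have hsub := nafDigit_sub h2
    have IH := naf_chain ((x - nafDigit x) / 2)
    refine ⟨?_, fun hc => absurd hc h2⟩
    rw [naf_odd h2]
    unfold List.Chain'; rw [List.isChain_cons]
    refine ⟨?_, ?_⟩
    · intro b hb
      have hbmem : b ∈ (naf ((x - nafDigit x) / 2)).map (fun p => (p.1 + 1, p.2)) :=
        List.mem_of_mem_head? hb
      obtain ⟨q, hq, rfl⟩ := List.mem_map.mp hbmem
      have := IH.2 (by omega) q hq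
      simp only
      omega
    · rw [List.isChain_map]
      exact List.IsChain.imp (fun a b h => by simpa using h) IH.1
  termination_by x.natAbs
  decreasing_by
  · omega
  · omega

/-- Exponent bound: every exponent k in the NAF of x satisfies 2^(k+1) < 3|x|. -/
theorem naf_bound (x : ℤ) (hx : x ≠ 0) :
    ∀ p ∈ naf x, 2 ^ (p.1 + 1) + 1 ≤ 3 * x.natAbs := by
  intro p hp
  by_cases h2 : x % 2 = 0
  · rw [naf_even hx h2] at hp
    obtain ⟨q, hq, rfl⟩ := List.mem_map.mp hp
    have IH := naf_bound (x / 2) (by omega) q hq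
    have hpow : (2:ℕ) ^ (q.1 + 1 + 1) = 2 * 2 ^ (q.1 + 1) := by ring
    simp only
    omega
  · have hd' := nafDigit_cases x
    have hsub := nafDigit_sub h2
    rw [naf_odd h2] at hp
    rcases List.mem_cons.mp hp with h | h
    · subst h; simp; omega
    · obtain ⟨q, hq, rfl⟩ := List.mem_map.mp h
      have hu2 : ((x - nafDigit x) / 2) % 2 = 0 := by omega
      by_cases hu0 : (x - nafDigit x) / 2 = 0
      · rw [hu0, naf_zero] at hq; simp at hq
      rw [naf_even hu0 hu2] at hq
      obtain ⟨r, hr, rfl⟩ := List.mem_map.mp hq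
      have IH := naf_bound ((x - nafDigit x) / 2 / 2) (by omega) r hr
      have hpow : (2:ℕ) ^ (r.1 + 1 + 1 + 1) = 4 * 2 ^ (r.1 + 1) := by ring
      simp only
      omega
  termination_by x.natAbs
  decreasing_by
  · omega
  · omega

/-- Among all integers congruent to x mod 2^m, the centered representative
(|x| ≤ 2^(m-1)) has minimal NAF length. -/
theorem naf_mod (m : ℕ) : ∀ x y : ℤ, 2 * x.natAbs ≤ 2 ^ m →
    ((2:ℤ) ^ m) ∣ (y - x) → (naf x).length ≤ (naf y).length := by
  induction m with
  | zero =>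
    intro x y hx _
    have : x = 0 := by simp at hx; omega
    simp [this, naf_zero]
  | succ m ih =>
    intro x y hx hdvd
    by_cases hx0 : x = 0
    · simp [hx0, naf_zero]
    obtain ⟨k, hk⟩ := hdvd
    set e : ℤ := 2 ^ m * k with he
    have hy : y = x + 2 * e := by
      rw [he]
      have : (2:ℤ) ^ (m + 1) = 2 * 2 ^ m := by ring
      rw [this] at hk
      linarith [hk]
    have hpw : (2:ℕ) ^ (m + 1) = 2 * 2 ^ m := by ring
    by_cases h2 : x % 2 = 0
    · -- even case
      have hy0 : y ≠ 0 := by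
        intro h
        apply hx0
        have hdx : ((2:ℤ) ^ (m+1)) ∣ x := ⟨-k, by rw [mul_neg]; omega⟩
        have := Int.eq_zero_of_abs_lt_dvd hdx (x := x) ?_
        · exact this
        · have hc : ((2:ℤ) ^ (m+1)) = ((2 ^ (m+1) : ℕ) : ℤ) := by push_cast; ring
          rw [hc, Int.abs_eq_natAbs]
          exact_mod_cast by omega
      rw [naf_even hx0 h2, naf_even hy0 (by omega)]
      simp only [List.length_map]
      apply ih (x / 2) (y / 2)
      · omega
      · exact ⟨k, by rw [← he]; omega⟩
    · -- odd case
      have hy2 : y % 2 ≠ 0 := by omega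
      match m, hx, hy, hpw, ih with
      | 0, hx, hy, hpw, ih =>
        -- x = ±1
        have hx1 : x = 1 ∨ x = -1 := by simp at hx; omega
        have hlen1 : (naf x).length = 1 := by
          rcases hx1 with rfl | rfl
          · rw [naf_odd (by norm_num)]
            norm_num [nafDigit, naf_zero]
          · rw [naf_odd (by norm_num)]
            norm_num [nafDigit, naf_zero]
        rw [hlen1]
        have := naf_ne_nil (x := y) (by omega)
        omega
      | (n + 1), hx, hy, hpw, ih =>
        -- m = n+1, so 4 ∣ 2^(m+1) and x ≡ y mod 4
        have he2 : ∃ e' : ℤ, e = 2 * e' := ⟨2 ^ n * k, by rw [he]; ring⟩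
        obtain ⟨e', he'⟩ := he2
        have hmod4 : y % 4 = x % 4 := by omega
        have hdig : nafDigit y = nafDigit x := nafDigit_congr hmod4
        have hd' := nafDigit_cases x
        have hsubx := nafDigit_sub h2
        have hsuby := nafDigit_sub hy2
        rw [naf_odd h2, naf_odd hy2]
        simp only [List.length_cons, List.length_map]
        have hdec : decide (y % 4 = 1) = decide (x % 4 = 1) := by rw [hmod4]
        have key : (naf ((x - nafDigit x) / 2)).length ≤ (naf ((y - nafDigit y) / 2)).length := by
          apply ih ((x - nafDigit x) / 2) ((y - nafDigit y) / 2)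
          · -- 2 * natAbs ((x - d)/2) ≤ 2^(n+1)
            have hpw2 : (2:ℕ) ^ (n + 1 + 1) = 2 * 2 ^ (n + 1) := by ring
            have hev : (2:ℕ) ^ (n + 1) % 2 = 0 := by
              have : (2:ℕ) ^ (n+1) = 2 * 2^n := by ring
              omega
            omega
          · refine ⟨k, ?_⟩
            rw [hdig]
            have hc : (2:ℤ) ^ (n + 1) * k = e := by rw [he]
            omega
        omega

theorem two_pow_ne_zero (m i : ℕ) (h : i < m) : ((2 : ZMod (2 ^ m)) ^ i) ≠ 0 := by
  have hc : ((2 : ZMod (2 ^ m)) ^ i) = ((2 ^ i : ℕ) : ZMod (2 ^ m)) := by push_cast; ring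
  rw [hc, Ne, ZMod.natCast_eq_zero_iff]
  intro hdvd
  have := (Nat.pow_dvd_pow_iff_le_right (one_lt_two)).mp hdvd
  omega

theorem stepVal_ne_zero (m : ℕ) (p : ℕ × Bool) (hp : p.1 < m) :
    stepVal (2 ^ m) 2 p ≠ 0 := by
  unfold stepVal
  split
  · exact two_pow_ne_zero m p.1 hp
  · rw [neg_ne_zero]; exact two_pow_ne_zero m p.1 hp

theorem recCirc_adj (m : ℕ) (a : ZMod (2 ^ m)) (p : ℕ × Bool) (hp : p.1 < m) :
    (recCirc (2 ^ m) 2).Adj a (a + stepVal (2 ^ m) 2 p) := by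
  rw [recCirc, SimpleGraph.circulantGraph_adj]
  constructor
  · intro h
    exact stepVal_ne_zero m p hp (by linear_combination -h)
  · have hclog : Nat.clog 2 (2 ^ m) = m := Nat.clog_pow 2 m one_lt_two
    by_cases hb : p.2
    · right
      exact ⟨p.1, by rw [hclog]; exact hp, by simp [stepVal, hb]⟩
    · left
      exact ⟨p.1, by rw [hclog]; exact hp, by simp [stepVal, hb]⟩

theorem walk_of_list (m : ℕ) (L : List (ℕ × Bool)) (hL : ∀ p ∈ L, p.1 < m)
    (a : ZMod (2 ^ m)) :
    ∃ w : (recCirc (2 ^ m) 2).Walk a (a + (L.map (stepVal (2 ^ m) 2)).sum),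
      w.length = L.length := by
  induction L generalizing a with
  | nil => exact ⟨SimpleGraph.Walk.nil.copy rfl (by simp), by simp⟩
  | cons p L ih =>
    obtain ⟨w, hw⟩ := ih (fun q hq => hL q (List.mem_cons_of_mem p hq))
      (a + stepVal (2 ^ m) 2 p)
    refine ⟨(SimpleGraph.Walk.cons (recCirc_adj m a p (hL p (List.mem_cons_self))) w).copy
      rfl (by simp [add_assoc]), by simp [hw]⟩

theorem list_of_walk (m : ℕ) {a b : ZMod (2 ^ m)} (w : (recCirc (2 ^ m) 2).Walk a b) :
    ∃ K : List (ℕ × Bool), (∀ p ∈ K, p.1 < m) ∧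
      (K.map (stepVal (2 ^ m) 2)).sum = b - a ∧ K.length = w.length := by
  induction w with
  | nil => exact ⟨[], by simp, by simp, rfl⟩
  | @cons a c b h w ih =>
    obtain ⟨K, hK1, hK2, hK3⟩ := ih
    rw [recCirc, SimpleGraph.circulantGraph_adj] at h
    have hclog : Nat.clog 2 (2 ^ m) = m := Nat.clog_pow 2 m one_lt_two
    rcases h.2 with ⟨i, hi, hv⟩ | ⟨i, hi, hv⟩
    · refine ⟨(i, false) :: K, ?_, ?_, by simp [hK3]⟩
      · intro q hq
        rcases List.mem_cons.mp hq with rfl | hq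
        · simpa [hclog] using hi
        · exact hK1 q hq
      · simp only [List.map_cons, List.sum_cons, hK2, stepVal]
        norm_num
        push_cast at hv
        linear_combination hv
    · refine ⟨(i, true) :: K, ?_, ?_, by simp [hK3]⟩
      · intro q hq
        rcases List.mem_cons.mp hq with rfl | hq
        · simpa [hclog] using hi
        · exact hK1 q hq
      · simp only [List.map_cons, List.sum_cons, hK2, stepVal]
        norm_num
        push_cast at hv
        linear_combination -hv

theorem sum_stepVal_cast (N : ℕ) (K : List (ℕ × Bool)) :
    (K.map (stepVal N 2)).sum = (((K.map stepInt).sum : ℤ) : ZMod N) := by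
  induction K with
  | nil => simp
  | cons p K ih =>
    simp only [List.map_cons, List.sum_cons, ih]
    push_cast
    congr 1
    unfold stepVal stepInt
    split <;> push_cast <;> ring

/-- Shortest-path lemma for G(2^m, 2): a shortest path from 0 to v can be chosen with
no cancelling pair ±2^j and never using steps at two consecutive exponents. -/
theorem exists_shortest_path_steps_two (m : ℕ) (hm : 1 ≤ m) (v : ZMod (2 ^ m)) :
    ∃ L : List (ℕ × Bool),
      (∀ p ∈ L, p.1 < m) ∧
      (L.map (stepVal (2 ^ m) 2)).sum = v ∧
      L.length = (recCirc (2 ^ m) 2).dist 0 v ∧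
      (∀ j, ¬((j, true) ∈ L ∧ (j, false) ∈ L)) ∧
      (∀ i ≤ m - 2, ¬((∃ s, (i, s) ∈ L) ∧ (∃ s, (i + 1, s) ∈ L))) := by
  haveI : NeZero (2 ^ m) := ⟨by positivity⟩
  set x : ℤ := if 2 * v.val ≤ 2 ^ m then (v.val : ℤ) else (v.val : ℤ) - 2 ^ m with hxdef
  have hvlt : v.val < 2 ^ m := ZMod.val_lt v
  have hcast : ((2 ^ m : ℕ) : ℤ) = (2 : ℤ) ^ m := by push_cast; ring
  have hxabs : 2 * x.natAbs ≤ 2 ^ m := by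
    rw [hxdef]; split <;> omega
  have hxcast : ((x : ℤ) : ZMod (2 ^ m)) = v := by
    rw [hxdef]
    split
    · push_cast
      rw [ZMod.natCast_val, ZMod.cast_id]
    · push_cast
      rw [ZMod.natCast_val, ZMod.cast_id]
      have hz : ((2 : ZMod (2 ^ m))) ^ m = 0 := by
        rw [show ((2 : ZMod (2 ^ m))) ^ m = ((2 ^ m : ℕ) : ZMod (2 ^ m)) by push_cast; ring,
          ZMod.natCast_self]
      rw [hz, sub_zero]
  have hexp : ∀ p ∈ naf x, p.1 < m := by
    intro p hp
    by_cases hx0 : x = 0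
    · rw [hx0, naf_zero] at hp; simp at hp
    have hb := naf_bound x hx0 p hp
    have h1 : (2 : ℕ) ^ (p.1 + 2) = 2 * 2 ^ (p.1 + 1) := by ring
    have h2 : (2 : ℕ) ^ (m + 2) = 4 * 2 ^ m := by ring
    have hlt : (2 : ℕ) ^ (p.1 + 2) < 2 ^ (m + 2) := by omega
    have := (Nat.pow_lt_pow_iff_right (one_lt_two)).mp hlt
    omega
  have hsum : ((naf x).map (stepVal (2 ^ m) 2)).sum = v := by
    rw [sum_stepVal_cast, naf_sum, hxcast]
  -- reachability and distance
  obtain ⟨w0, hw0⟩ := walk_of_list m (naf x) hexp 0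
  have hw0' : (0 : ZMod (2 ^ m)) + ((naf x).map (stepVal (2 ^ m) 2)).sum = v := by
    rw [zero_add, hsum]
  set w1 : (recCirc (2 ^ m) 2).Walk 0 v := w0.copy rfl hw0' with hw1def
  have hreach : (recCirc (2 ^ m) 2).Reachable 0 v := ⟨w1⟩
  have hupper : (recCirc (2 ^ m) 2).dist 0 v ≤ (naf x).length := by
    have := SimpleGraph.dist_le w1
    simpa [hw1def, hw0] using this
  have hlower : (naf x).length ≤ (recCirc (2 ^ m) 2).dist 0 v := by
    obtain ⟨w, hw⟩ := hreach.exists_walk_length_eq_dist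
    obtain ⟨K, hK1, hK2, hK3⟩ := list_of_walk m w
    have hKv : (((K.map stepInt).sum : ℤ) : ZMod (2 ^ m)) = v := by
      rw [← sum_stepVal_cast, hK2, sub_zero]
    have hcong : ((2 : ℤ) ^ m) ∣ ((K.map stepInt).sum - x) := by
      have : ((x : ℤ) : ZMod (2 ^ m)) = (((K.map stepInt).sum : ℤ) : ZMod (2 ^ m)) := by
        rw [hxcast, hKv]
      have hmeq := (ZMod.intCast_eq_intCast_iff _ _ _).mp this
      have := hmeq.dvd
      rwa [hcast] at this
    calc (naf x).length ≤ (naf ((K.map stepInt).sum)).length := naf_mod m x _ hxabs hcong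
      _ ≤ K.length := naf_min K
      _ = w.length := hK3
      _ = _ := hw
  -- pairwise structure
  haveI : IsTrans (ℕ × Bool) (fun p q => p.1 + 2 ≤ q.1) := ⟨fun a b c h1 h2 => by omega⟩
  haveI : Trans (fun p q : ℕ × Bool => p.1 + 2 ≤ q.1) (fun p q : ℕ × Bool => p.1 + 2 ≤ q.1)
      (fun p q : ℕ × Bool => p.1 + 2 ≤ q.1) := ⟨fun h1 h2 => by omega⟩
  have hpair : (naf x).Pairwise (fun p q => p.1 + 2 ≤ q.1) :=
    List.isChain_iff_pairwise.mp (naf_chain x).1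
  have hsympair : (naf x).Pairwise (fun p q => p.1 + 2 ≤ q.1 ∨ q.1 + 2 ≤ p.1) :=
    hpair.imp fun h => Or.inl h
  haveI : Std.Symm (fun p q : ℕ × Bool => p.1 + 2 ≤ q.1 ∨ q.1 + 2 ≤ p.1) := ⟨fun a b h => h.symm⟩
  have hfa := hsympair.forall
  refine ⟨naf x, hexp, hsum, le_antisymm hlower hupper, ?_, ?_⟩
  · intro j ⟨h1, h2⟩
    have := hfa h1 h2 (by simp)
    simp only at this
    omega
  · intro i _ ⟨⟨s, hs⟩, ⟨s', hs'⟩⟩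
    have hne : (i, s) ≠ (i + 1, s') := by
      intro h
      have := congrArg Prod.fst h
      simp at this
    have := hfa hs hs' hne
    simp only at this
    omega
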